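/- For all natural numbers a, b ≥ 1 with (a,b) ≠ (1,1), gcd(a,b) = (((−3^(ab(ab+a+b))) mod ((3^(a²b) − 1)(3^(ab²) − 1))) mod 3^(ab)) − 2, where the computation is carried out in the integers and x mod y denotes the unique representative in [0, y) for y > 0. -/

import Mathlib

open Finset

lemma blocksum (f : ℕ → ℤ) (B d : ℕ) :
    ∑ k ∈ range (B * d), f (k % B) = d * ∑ j ∈ range B, f j := by
  induction d with
  | zero => simp
  | succ n ih =>
    rw [Nat.mul_succ, Finset.sum_range_add, ih]
    have : ∀ k ∈ range B, f ((B * n + k) % B) = f k := by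
      intro k hk
      rw [Nat.add_mod, Nat.mul_mod_right, Nat.zero_add, Nat.mod_mod_of_dvd,
        Nat.mod_eq_of_lt (mem_range.mp hk)]
      exact dvd_refl B
    rw [Finset.sum_congr rfl this]
    push_cast
    ring

lemma bijsum (y : ℤ) (A B : ℕ) (hB : 1 ≤ B) (hcop : Nat.Coprime A B) :
    ∑ j ∈ range B, y ^ (A * j % B) = ∑ j ∈ range B, y ^ j := by
  have hinj : ∀ j1 ∈ range B, ∀ j2 ∈ range B, A * j1 % B = A * j2 % B → j1 = j2 := by
    intro j1 h1 j2 h2 h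
    have : j1 % B = j2 % B :=
      Nat.ModEq.cancel_left_of_coprime (Nat.Coprime.gcd_eq_one hcop.symm) h
    rwa [Nat.mod_eq_of_lt (mem_range.mp h1), Nat.mod_eq_of_lt (mem_range.mp h2)] at this
  have hsub : (range B).image (fun j => A * j % B) ⊆ range B := by
    intro j hj
    simp only [mem_image] at hj
    obtain ⟨k, _, rfl⟩ := hj
    exact mem_range.mpr (Nat.mod_lt _ hB)
  have himg : (range B).image (fun j => A * j % B) = range B :=
    Finset.eq_of_subset_of_card_le hsub (by rw [Finset.card_image_of_injOn hinj])
  conv_rhs => rw [← himg]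
  rw [Finset.sum_image hinj]

set_option maxHeartbeats 1000000 in
lemma key (a b : ℕ) (x : ℤ) (ha : 1 ≤ a) (hab : a ≤ b) (hx : 2 * (b : ℤ) + 3 ≤ x) :
    ((-x ^ (a * b + a + b)) % ((x ^ a - 1) * (x ^ b - 1))) % x = (Nat.gcd a b : ℤ) + 2 := by
  have hb : 1 ≤ b := le_trans ha hab
  set d := Nat.gcd a b with hd
  have hd1 : 1 ≤ d := Nat.gcd_pos_of_pos_left b ha
  set A := a / d with hA
  set B := b / d with hB
  have haA : a = d * A := (Nat.mul_div_cancel' (Nat.gcd_dvd_left a b)).symm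
  have hbB : b = d * B := (Nat.mul_div_cancel' (Nat.gcd_dvd_right a b)).symm
  have hA1 : 1 ≤ A := Nat.div_pos (Nat.le_of_dvd ha (Nat.gcd_dvd_left a b)) hd1
  have hB1 : 1 ≤ B := Nat.div_pos (Nat.le_of_dvd hb (Nat.gcd_dvd_right a b)) hd1
  have hcop : Nat.Coprime A B := Nat.coprime_div_gcd_div_gcd (by omega)
  set y := x ^ d with hy
  set Sa := ∑ k ∈ range A, y ^ k with hSa
  set Sb := ∑ k ∈ range B, y ^ k with hSb
  have hxa : x ^ a = y ^ A := by rw [haA, pow_mul]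
  have hxb : x ^ b = y ^ B := by rw [hbB, pow_mul]
  have geoa : x ^ a - 1 = (y - 1) * Sa := by
    rw [hxa]; have := geom_sum_mul y A; linarith
  have geob : x ^ b - 1 = (y - 1) * Sb := by
    rw [hxb]; have := geom_sum_mul y B; linarith
  set G := ∑ k ∈ range (b + 1), (x ^ a) ^ k with hG
  set C := x ^ b * G with hC
  set r := (1 - x ^ b) * (1 + (d : ℤ) * Sa) - x ^ a with hr
  set M := (x ^ a - 1) * (x ^ b - 1) with hM
  -- (ii)
  have hGgeom : G * (x ^ a - 1) = (x ^ a) ^ (b + 1) - 1 := geom_sum_mul _ _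
  have hii : x ^ (a * b + a + b) = x ^ b + (x ^ a - 1) * C := by
    have e : a * b + a + b = a * (b + 1) + b := by ring
    rw [e, pow_add, pow_mul, hC]
    linear_combination (-(x ^ b)) * hGgeom
  -- (iii)
  have hF : x ^ (a * b + a + b) + r = (y - 1) * Sa * (C - 1 - (d : ℤ) * Sb) := by
    rw [hii, hr]
    linear_combination (C - 1) * geoa - (d : ℤ) * Sa * geob
  -- (iv)
  have h1m : x ^ b ≡ 1 [ZMOD x ^ b - 1] := by
    have : (x ^ b - 1) ∣ (1 - x ^ b) := ⟨-1, by ring⟩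
    exact (Int.modEq_iff_dvd.mpr this)
  have hpowmod : ∀ n : ℕ, x ^ n ≡ x ^ (n % b) [ZMOD x ^ b - 1] := by
    intro n
    calc x ^ n = (x ^ b) ^ (n / b) * x ^ (n % b) := by
          rw [← pow_mul, ← pow_add, Nat.div_add_mod]
      _ ≡ 1 ^ (n / b) * x ^ (n % b) [ZMOD x ^ b - 1] := ((h1m.pow _).mul_right _)
      _ = x ^ (n % b) := by ring
  have hsum : ∑ k ∈ range b, x ^ (a * k) ≡ (d : ℤ) * Sb [ZMOD x ^ b - 1] := by
    have step1 : ∑ k ∈ range b, x ^ (a * k) ≡ ∑ k ∈ range b, x ^ (a * k % b) [ZMOD x ^ b - 1] := by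
      have hdv : (x ^ b - 1) ∣ ∑ k ∈ range b, (x ^ (a * k % b) - x ^ (a * k)) :=
        Finset.dvd_sum fun k _ => Int.ModEq.dvd (hpowmod (a * k))
      rw [Finset.sum_sub_distrib] at hdv
      exact Int.modEq_iff_dvd.mpr (by simpa using hdv)
    have step2 : ∀ k : ℕ, x ^ (a * k % b) = y ^ (A * (k % B) % B) := by
      intro k
      have e1 : a * k % b = d * (A * k % B) := by
        rw [haA, hbB, Nat.mul_assoc, Nat.mul_mod_mul_left]
      have e2 : A * k % B = A * (k % B) % B := ((Nat.mod_modEq k B).mul_left A).symm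
      rw [e1, e2, pow_mul]
    calc ∑ k ∈ range b, x ^ (a * k)
        ≡ ∑ k ∈ range b, x ^ (a * k % b) [ZMOD x ^ b - 1] := step1
      _ = ∑ k ∈ range b, (fun j => y ^ (A * j % B)) (k % B) :=
          Finset.sum_congr rfl fun k _ => step2 k
      _ = ∑ k ∈ range (B * d), (fun j => y ^ (A * j % B)) (k % B) := by
          rw [show b = B * d from by rw [hbB]; ring]
      _ = (d : ℤ) * ∑ j ∈ range B, y ^ (A * j % B) :=
          blocksum (fun j => y ^ (A * j % B)) B d
      _ = (d : ℤ) * Sb := by rw [bijsum y A B hB1 hcop]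
  have hxabm : x ^ (a * b) ≡ 1 [ZMOD x ^ b - 1] := by
    calc x ^ (a * b) = (x ^ b) ^ a := by rw [← pow_mul, Nat.mul_comm]
      _ ≡ 1 ^ a [ZMOD x ^ b - 1] := h1m.pow a
      _ = 1 := one_pow a
  have div1 : (x ^ b - 1) ∣ (C - 1 - (d : ℤ) * Sb) := by
    have hCm : C ≡ (d : ℤ) * Sb + 1 [ZMOD x ^ b - 1] := by
      calc C = x ^ b * G := hC
        _ ≡ 1 * G [ZMOD x ^ b - 1] := h1m.mul_right G
        _ = (∑ k ∈ range b, x ^ (a * k)) + x ^ (a * b) := by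
            rw [one_mul, hG, Finset.sum_range_succ, ← pow_mul]
            congr 1
            exact Finset.sum_congr rfl fun k _ => by rw [← pow_mul]
        _ ≡ (d : ℤ) * Sb + 1 [ZMOD x ^ b - 1] := hsum.add hxabm
    have h : (x ^ b - 1) ∣ ((d : ℤ) * Sb + 1 - C) := hCm.dvd
    rw [show (d : ℤ) * Sb + 1 - C = -(C - 1 - (d : ℤ) * Sb) from by ring] at h
    exact dvd_neg.mp h
  have hdvd : M ∣ (x ^ (a * b + a + b) + r) := by
    obtain ⟨t, ht⟩ := div1
    exact ⟨t, by rw [hF, ht, hM, geoa]; ring⟩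
  -- bounds
  have hbz : (1 : ℤ) ≤ (b : ℤ) := by exact_mod_cast hb
  have haz : (1 : ℤ) ≤ (a : ℤ) := by exact_mod_cast ha
  have habz : (a : ℤ) ≤ (b : ℤ) := by exact_mod_cast hab
  have hx5 : (5 : ℤ) ≤ x := by linarith
  have hx1 : (1 : ℤ) ≤ x := by linarith
  have hy1 : (1 : ℤ) ≤ y := one_le_pow₀ hx1
  have hyx : x ≤ y := by
    calc x = x ^ 1 := (pow_one x).symm
      _ ≤ x ^ d := pow_le_pow_right₀ hx1 hd1
  have hxaxb : x ^ a ≤ x ^ b := pow_le_pow_right₀ hx1 hab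
  have hxxa : x ≤ x ^ a := by
    calc x = x ^ 1 := (pow_one x).symm
      _ ≤ x ^ a := pow_le_pow_right₀ hx1 ha
  have hSa1 : (1 : ℤ) ≤ Sa := by
    rw [hSa]
    calc (1 : ℤ) = y ^ 0 := by norm_num
      _ ≤ ∑ k ∈ range A, y ^ k :=
        Finset.single_le_sum (fun i _ => pow_nonneg (by linarith) i) (mem_range.mpr hA1)
  have hSaub : Sa ≤ (A : ℤ) * y ^ (A - 1) := by
    rw [hSa]
    calc ∑ k ∈ range A, y ^ k ≤ (range A).card • y ^ (A - 1) :=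
        Finset.sum_le_card_nsmul _ _ _
          (fun i hi => pow_le_pow_right₀ hy1 (Nat.le_pred_of_lt (mem_range.mp hi)))
      _ = (A : ℤ) * y ^ (A - 1) := by rw [card_range, nsmul_eq_mul]
  have hdA : (d : ℤ) * (A : ℤ) = (a : ℤ) := by exact_mod_cast haA.symm
  have hyA : y ^ A = y ^ (A - 1) * y := by
    rw [← pow_succ]; congr 1; omega
  have hyA1pos : (1 : ℤ) ≤ y ^ (A - 1) := one_le_pow₀ hy1
  have h2a : 2 * (a : ℤ) ≤ y - 3 := by linarith
  have h2dSa : 2 * (d : ℤ) * Sa ≤ y ^ A - 3 := by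
    have hdz : (0 : ℤ) ≤ 2 * (d : ℤ) := by positivity
    have h1 : 2 * (d : ℤ) * Sa ≤ 2 * (d : ℤ) * ((A : ℤ) * y ^ (A - 1)) :=
      mul_le_mul_of_nonneg_left hSaub hdz
    have h2 : 2 * (d : ℤ) * ((A : ℤ) * y ^ (A - 1)) = 2 * (a : ℤ) * y ^ (A - 1) := by
      rw [← hdA]; ring
    have h3 : 2 * (a : ℤ) * y ^ (A - 1) ≤ (y - 3) * y ^ (A - 1) :=
      mul_le_mul_of_nonneg_right h2a (by linarith)
    have h4 : (y - 3) * y ^ (A - 1) = y ^ A - 3 * y ^ (A - 1) := by rw [hyA]; ring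
    linarith
  have hxayA : x ^ a = y ^ A := hxa
  have hxyA : x ≤ y ^ A := by rw [← hxayA]; exact hxxa
  have ht0 : (2 : ℤ) ≤ x ^ a - 2 - (d : ℤ) * Sa := by
    rw [hxayA]; linarith
  have hrneg : r < 0 := by
    rw [hr]
    have h1 : 0 < (x ^ b - 1) * (1 + (d : ℤ) * Sa) := by
      apply mul_pos (by linarith) (by have : (0:ℤ) ≤ (d:ℤ) * Sa := mul_nonneg (by positivity) (by linarith); linarith)
    have h2 : (1 - x ^ b) * (1 + (d : ℤ) * Sa) = -((x ^ b - 1) * (1 + (d : ℤ) * Sa)) := by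
      ring
    rw [h2]
    linarith
  have hMr : 0 < M + r := by
    have hid : M + r = (x ^ b - 1) * (x ^ a - 2 - (d : ℤ) * Sa) - x ^ a := by
      rw [hM, hr]; ring
    have hmul : (x ^ b - 1) * 2 ≤ (x ^ b - 1) * (x ^ a - 2 - (d : ℤ) * Sa) :=
      mul_le_mul_of_nonneg_left ht0 (by linarith)
    linarith
  have hM0 : 0 < M := by linarith
  -- modular arithmetic
  have h1 : (-x ^ (a * b + a + b)) % M = r % M := by
    have hme : (-x ^ (a * b + a + b)) ≡ r [ZMOD M] := Int.modEq_iff_dvd.mpr (by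
      rw [show r - -x ^ (a * b + a + b) = x ^ (a * b + a + b) + r from by ring]
      exact hdvd)
    exact hme
  have h2 : r % M = r + M := by
    have e1 : (r + M) % M = r % M := by
      have := Int.add_mul_emod_self_left (a := r) (b := M) (c := 1)
      simpa using this
    rw [← e1, Int.emod_eq_of_lt (by linarith) (by linarith)]
  have e1 : x ^ a ≡ 0 [ZMOD x] := Int.modEq_zero_iff_dvd.mpr (dvd_pow_self x (by omega))
  have e2 : x ^ b ≡ 0 [ZMOD x] := Int.modEq_zero_iff_dvd.mpr (dvd_pow_self x (by omega))
  have e3 : Sa ≡ 1 [ZMOD x] := by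
    have hdiv : x ∣ Sa - 1 := by
      rw [hSa, show A = (A - 1) + 1 from by omega, Finset.sum_range_succ']
      rw [show (∑ k ∈ range (A - 1), y ^ (k + 1)) + y ^ 0 - 1
          = ∑ k ∈ range (A - 1), y ^ (k + 1) from by simp]
      apply Finset.dvd_sum
      intro i _
      rw [hy, ← pow_mul]
      exact dvd_pow_self x (by positivity)
    exact Int.modEq_iff_dvd.mpr (by
      rw [show (1 : ℤ) - Sa = -(Sa - 1) from by ring]
      exact dvd_neg.mpr hdiv)
  have hmod : r + M ≡ ((1 : ℤ) - 0) * (1 + (d : ℤ) * 1) - 0 + ((0 : ℤ) - 1) * ((0 : ℤ) - 1)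
      [ZMOD x] := by
    rw [hr, hM]
    exact ((((Int.ModEq.refl 1).sub e2).mul
      ((Int.ModEq.refl 1).add ((Int.ModEq.refl (d : ℤ)).mul e3))).sub e1).add
      ((e1.sub (Int.ModEq.refl 1)).mul (e2.sub (Int.ModEq.refl 1)))
  rw [show ((1 : ℤ) - 0) * (1 + (d : ℤ) * 1) - 0 + ((0 : ℤ) - 1) * ((0 : ℤ) - 1)
      = (d : ℤ) + 2 from by ring] at hmod
  have hdb : (d : ℤ) ≤ (b : ℤ) := by exact_mod_cast Nat.gcd_le_right (m := a) (n := b) hb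
  have h3 : (r + M) % x = (d : ℤ) + 2 := by
    have : (r + M) % x = ((d : ℤ) + 2) % x := hmod
    rw [this, Int.emod_eq_of_lt (by positivity) (by linarith)]
  rw [h1, h2, h3]

lemma key2 (a b : ℕ) (x : ℤ) (ha : 1 ≤ a) (hb : 1 ≤ b)
    (hx : 2 * (a : ℤ) + 2 * (b : ℤ) + 3 ≤ x) :
    ((-x ^ (a * b + a + b)) % ((x ^ a - 1) * (x ^ b - 1))) % x = (Nat.gcd a b : ℤ) + 2 := by
  have haz : (1 : ℤ) ≤ (a : ℤ) := by exact_mod_cast ha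
  have hbz : (1 : ℤ) ≤ (b : ℤ) := by exact_mod_cast hb
  rcases le_total a b with h | h
  · exact key a b x ha h (by linarith)
  · have := key b a x hb h (by linarith)
    rw [Nat.gcd_comm, show b * a + b + a = a * b + a + b from by ring,
      mul_comm ((x : ℤ) ^ b - 1)] at this
    exact this

lemma pow3ge (n : ℕ) (hn : 2 ≤ n) : 2 * n + 5 ≤ 3 ^ n := by
  induction n with
  | zero => omega
  | succ m ih =>
    rcases Nat.lt_or_ge m 2 with h | h
    · interval_cases m <;> omega
    · have := ih h
      have : 3 ^ (m + 1) = 3 * 3 ^ m := by ring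
      omega

theorem gcd_mod_mod_base3 (a b : ℕ) (ha : 1 ≤ a) (hb : 1 ≤ b) (hab : (a, b) ≠ (1, 1)) :
    (Nat.gcd a b : ℤ) =
      ((-(3 : ℤ) ^ (a * b * (a * b + a + b)))
          % (((3 : ℤ) ^ (a ^ 2 * b) - 1) * ((3 : ℤ) ^ (a * b ^ 2) - 1)))
        % (3 : ℤ) ^ (a * b) - 2 := by
  set x : ℤ := (3 : ℤ) ^ (a * b) with hx
  have e1 : (3 : ℤ) ^ (a ^ 2 * b) = x ^ a := by
    rw [hx, ← pow_mul]; congr 1; ring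
  have e2 : (3 : ℤ) ^ (a * b ^ 2) = x ^ b := by
    rw [hx, ← pow_mul]; congr 1; ring
  have e3 : (3 : ℤ) ^ (a * b * (a * b + a + b)) = x ^ (a * b + a + b) := by
    rw [hx, ← pow_mul]
  have hbig : 2 * (a : ℤ) + 2 * (b : ℤ) + 3 ≤ x := by
    have hne : ¬(a = 1 ∧ b = 1) := by
      rintro ⟨rfl, rfl⟩
      exact hab rfl
    have h0 : a + b ≤ a * b + 1 := by nlinarith
    have h1 : a + b - 1 ≤ a * b := by omega
    have h2 : 2 ≤ a + b - 1 := by omega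
    have h3 : 2 * (a + b - 1) + 5 ≤ 3 ^ (a + b - 1) := pow3ge _ h2
    have h4 : (3 : ℕ) ^ (a + b - 1) ≤ 3 ^ (a * b) := Nat.pow_le_pow_right (by norm_num) h1
    have h5 : 2 * a + 2 * b + 3 ≤ 3 ^ (a * b) := by omega
    calc 2 * (a : ℤ) + 2 * (b : ℤ) + 3 = ((2 * a + 2 * b + 3 : ℕ) : ℤ) := by push_cast; ring
      _ ≤ ((3 ^ (a * b) : ℕ) : ℤ) := by exact_mod_cast h5
      _ = x := by push_cast; rfl
  rw [e1, e2, e3, key2 a b x ha hb hbig]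
  ring
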